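/- Let T ⊆ ℝⁿ be a closed regular set, I ⊆ ℤ₊ⁿ a finite regular set of multi-indices, and g = (g_i)_{i∈I} with g_0 = 1. The following are equivalent: (a) there exists f ∈ L¹(T, dt) with f ≥ 0 a.e., ∫_T |t^i| f(t) dt < ∞ for all i ∈ I, and ∫_T t^i f(t) dt = g_i for all i ∈ I; (b) the Riesz functional φ_g : P_I → ℝ satisfies φ_g(p) > 0 for every nonzero p ∈ P_I with p(t) ≥ 0 for all t ∈ T. -/

import Mathlib

open MeasureTheory
open scoped InnerProductSpace

/-- `P_I`: the linear span of the monomials `X^i`, `i ∈ I`, in `ℝ[X₁,…,Xₙ]`. -/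
noncomputable def PIdx (n : ℕ) (I : Finset (Fin n →₀ ℕ)) :
    Submodule ℝ (MvPolynomial (Fin n) ℝ) :=
  Submodule.span ℝ {q | ∃ i ∈ I, q = MvPolynomial.monomial i 1}

/-- The Riesz functional `φ_g` associated to `g = (g_i)_{i ∈ I}`: on `P_I` it sends
`Σ_{i ∈ I} c_i X^i` to `Σ_{i ∈ I} g_i c_i`. -/
noncomputable def riesz (n : ℕ) (I : Finset (Fin n →₀ ℕ)) (g : I → ℝ)
    (p : MvPolynomial (Fin n) ℝ) : ℝ :=
  ∑ i : I, g i * MvPolynomial.coeff i.1 p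

/-- The monomial function `t ^ i = t₁^{i₁} ⋯ tₙ^{iₙ}` on `ℝⁿ`. -/
noncomputable def monoF (n : ℕ) (i : Fin n →₀ ℕ) (t : EuclideanSpace ℝ (Fin n)) : ℝ :=
  ∏ k, t k ^ i k

/-- A set `T ⊆ ℝⁿ` is regular if it is nonempty and for every `t ∈ T` and `ε > 0` the
Lebesgue measure of `{x ∈ T : ‖x - t‖ < ε}` is positive. -/
def RegularSet (n : ℕ) (T : Set (EuclideanSpace ℝ (Fin n))) : Prop :=
  T.Nonempty ∧ ∀ t ∈ T, ∀ ε > (0 : ℝ), 0 < volume {x ∈ T | ‖x - t‖ < ε}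

/-- A finite set `I` of multi-indices is regular if it is nonempty and for every `i ∈ I` the
set `σ_i = {j : j k = 0 or j k = i k for each k}` is contained in `I`. -/
def RegularIdx (n : ℕ) (I : Finset (Fin n →₀ ℕ)) : Prop :=
  I.Nonempty ∧ ∀ i ∈ I, ∀ j : Fin n →₀ ℕ, (∀ k, j k = 0 ∨ j k = i k) → j ∈ I

/-! ### Auxiliary lemmas -/

section Aux

lemma monoF_continuous (n : ℕ) (i : Fin n →₀ ℕ) : Continuous (monoF n i) := by
  unfold monoF
  apply continuous_finset_prod
  intro k _
  exact ((EuclideanSpace.proj k).continuous).pow _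

lemma mv_null_pi (n : ℕ) (p : MvPolynomial (Fin n) ℝ) (hp : p ≠ 0) :
    (volume : Measure (Fin n → ℝ)) {x | MvPolynomial.eval x p = 0} = 0 := by
  induction n with
  | zero =>
      obtain ⟨c, rfl⟩ := MvPolynomial.C_surjective (Fin 0) p
      have hc : c ≠ 0 := fun h => hp (by rw [h, map_zero])
      have : {x : Fin 0 → ℝ | MvPolynomial.eval x (MvPolynomial.C c) = 0} = ∅ := by
        ext x; simp [hc]
      rw [this, measure_empty]
  | succ n ih =>
    set q : Polynomial (MvPolynomial (Fin n) ℝ) := MvPolynomial.finSuccEquiv ℝ n p with hq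
    have hq0 : q ≠ 0 := by
      intro h
      exact hp ((map_eq_zero_iff _ (MvPolynomial.finSuccEquiv ℝ n).injective).mp (hq ▸ h))
    obtain ⟨k, hk⟩ : ∃ k, q.coeff k ≠ 0 := by
      by_contra h
      push_neg at h
      exact hq0 (Polynomial.ext fun k => by simp [h k])
    set A : Set (ℝ × (Fin n → ℝ)) :=
      {ys | Polynomial.eval ys.1 (q.map (MvPolynomial.eval ys.2)) = 0} with hA
    have hAcont : Continuous fun ys : ℝ × (Fin n → ℝ) =>
        Polynomial.eval ys.1 (q.map (MvPolynomial.eval ys.2)) := by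
      have : ∀ ys : ℝ × (Fin n → ℝ), Polynomial.eval ys.1 (q.map (MvPolynomial.eval ys.2)) =
          ∑ i ∈ Finset.range (q.natDegree + 1),
            MvPolynomial.eval ys.2 (q.coeff i) * ys.1 ^ i := by
        intro ys
        rw [Polynomial.eval_eq_sum_range' (lt_of_le_of_lt Polynomial.natDegree_map_le
          (Nat.lt_succ_self _))]
        exact Finset.sum_congr rfl fun i _ => by rw [Polynomial.coeff_map]
      rw [continuous_congr fun ys => (this ys)]
      apply continuous_finset_sum
      intro i _
      exact ((MvPolynomial.continuous_eval _).comp continuous_snd).mul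
        ((continuous_pow i).comp continuous_fst)
    have hAm : MeasurableSet A := (isClosed_eq hAcont continuous_const).measurableSet
    have hslice : ∀ᵐ s ∂(volume : Measure (Fin n → ℝ)),
        (volume : Measure ℝ) ((fun y => (y, s)) ⁻¹' A) = 0 := by
      have hN : ∀ᵐ s ∂(volume : Measure (Fin n → ℝ)),
          MvPolynomial.eval s (q.coeff k) ≠ 0 := by
        rw [ae_iff]
        simpa using ih (q.coeff k) hk
      filter_upwards [hN] with s hs
      have hmap : q.map (MvPolynomial.eval s) ≠ 0 := by
        intro h
        apply hs
        simpa [Polynomial.coeff_map] using congrArg (fun r => Polynomial.coeff r k) h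
      have : ((fun y => (y, s)) ⁻¹' A) = {y | (q.map (MvPolynomial.eval s)).IsRoot y} := rfl
      rw [this]
      exact Set.Finite.measure_zero (Polynomial.finite_setOf_isRoot hmap) _
    have hprod : ((volume : Measure ℝ).prod (volume : Measure (Fin n → ℝ))) A = 0 := by
      rw [MeasureTheory.Measure.prod_apply_symm hAm]
      rw [lintegral_congr_ae hslice]
      simp
    have hmp := measurePreserving_piFinSuccAbove (fun _ : Fin (n+1) => (volume : Measure ℝ)) 0
    have hpre : (MeasurableEquiv.piFinSuccAbove (fun _ : Fin (n+1) => ℝ) 0) ⁻¹' A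
        = {x | MvPolynomial.eval x p = 0} := by
      ext x
      have h1 : MvPolynomial.eval x p =
          Polynomial.eval (x 0) (q.map (MvPolynomial.eval (Fin.tail x))) := by
        conv_lhs => rw [← Fin.cons_self_tail x]
        exact MvPolynomial.eval_eq_eval_mv_eval' (Fin.tail x) (x 0) p
      simp only [Set.mem_preimage, hA, Set.mem_setOf_eq, h1,
        MeasurableEquiv.piFinSuccAbove_apply]
      rfl
    have key := hmp.measure_preimage hAm.nullMeasurableSet
    rw [hpre] at key
    rw [← MeasureTheory.volume_pi] at key
    rw [key, ← MeasureTheory.volume_pi]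
    exact hprod

lemma mv_null_euc (n : ℕ) (p : MvPolynomial (Fin n) ℝ) (hp : p ≠ 0) :
    (volume : Measure (EuclideanSpace ℝ (Fin n)))
      {t | MvPolynomial.eval (fun k => t k) p = 0} = 0 := by
  have hmp := PiLp.volume_preserving_ofLp (Fin n)
  have hm : MeasurableSet {x : Fin n → ℝ | MvPolynomial.eval x p = 0} :=
    (isClosed_eq (by continuity) continuous_const).measurableSet
  have key := hmp.measure_preimage hm.nullMeasurableSet
  have h2 : (@WithLp.ofLp 2 (Fin n → ℝ)) ⁻¹' {x | MvPolynomial.eval x p = 0}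
      = {t : EuclideanSpace ℝ (Fin n) | MvPolynomial.eval (fun k => t k) p = 0} := rfl
  rw [h2] at key
  rw [key, mv_null_pi n p hp]

variable (n : ℕ) (I : Finset (Fin n →₀ ℕ))

/-- The polynomial function associated to a coefficient vector. -/
noncomputable def polyV (p : EuclideanSpace ℝ ↥I) (t : EuclideanSpace ℝ (Fin n)) : ℝ :=
  ∑ i : ↥I, p i * monoF n i.1 t

/-- The polynomial associated to a coefficient vector. -/
noncomputable def toPoly (p : EuclideanSpace ℝ ↥I) : MvPolynomial (Fin n) ℝ :=
  ∑ i : ↥I, MvPolynomial.monomial i.1 (p i)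

lemma coeff_toPoly (p : EuclideanSpace ℝ ↥I) (i : ↥I) :
    MvPolynomial.coeff i.1 (toPoly n I p) = p i := by
  unfold toPoly
  rw [MvPolynomial.coeff_sum]
  rw [Finset.sum_eq_single i]
  · simp [MvPolynomial.coeff_monomial]
  · intro j _ hj
    rw [MvPolynomial.coeff_monomial, if_neg]
    intro h
    exact hj (Subtype.ext h)
  · simp

lemma coeff_toPoly_nmem (p : EuclideanSpace ℝ ↥I) (j : Fin n →₀ ℕ) (hj : j ∉ I) :
    MvPolynomial.coeff j (toPoly n I p) = 0 := by
  unfold toPoly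
  rw [MvPolynomial.coeff_sum]
  apply Finset.sum_eq_zero
  intro i _
  rw [MvPolynomial.coeff_monomial, if_neg]
  intro h
  exact hj (h ▸ i.2)

lemma toPoly_mem (p : EuclideanSpace ℝ ↥I) : toPoly n I p ∈ PIdx n I := by
  apply Submodule.sum_mem
  intro i _
  have : (MvPolynomial.monomial i.1 (p i) : MvPolynomial (Fin n) ℝ)
      = p i • MvPolynomial.monomial i.1 1 := by
    rw [MvPolynomial.smul_monomial, smul_eq_mul, mul_one]
  rw [this]
  exact Submodule.smul_mem _ _ (Submodule.subset_span ⟨i.1, i.2, rfl⟩)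

lemma toPoly_eq_zero (p : EuclideanSpace ℝ ↥I) (h : toPoly n I p = 0) : p = 0 := by
  ext i
  have := coeff_toPoly n I p i
  rw [h] at this
  simpa using this.symm

lemma eval_toPoly (p : EuclideanSpace ℝ ↥I) (t : EuclideanSpace ℝ (Fin n)) :
    MvPolynomial.eval (fun k => t k) (toPoly n I p) = polyV n I p t := by
  unfold toPoly polyV
  rw [map_sum]
  apply Finset.sum_congr rfl
  intro i _
  rw [MvPolynomial.eval_monomial]
  unfold monoF
  rw [Finsupp.prod_pow]

lemma coeff_zero_of_mem_PIdx (q : MvPolynomial (Fin n) ℝ) (hq : q ∈ PIdx n I)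
    (j : Fin n →₀ ℕ) (hj : j ∉ I) : MvPolynomial.coeff j q = 0 := by
  induction hq using Submodule.span_induction with
  | mem x hx =>
      obtain ⟨i, hi, rfl⟩ := hx
      rw [MvPolynomial.coeff_monomial, if_neg]
      intro h; exact hj (h ▸ hi)
  | zero => simp
  | add x y _ _ hx hy => rw [MvPolynomial.coeff_add, hx, hy, add_zero]
  | smul c x _ hx => rw [MvPolynomial.coeff_smul, hx, smul_zero]

/-- The coefficient vector of a polynomial. -/
noncomputable def pvec (q : MvPolynomial (Fin n) ℝ) : EuclideanSpace ℝ ↥I :=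
  WithLp.toLp 2 (fun i => MvPolynomial.coeff i.1 q)

lemma toPoly_pvec (q : MvPolynomial (Fin n) ℝ) (hq : q ∈ PIdx n I) :
    toPoly n I (pvec n I q) = q := by
  apply MvPolynomial.ext
  intro j
  by_cases hj : j ∈ I
  · rw [coeff_toPoly n I _ ⟨j, hj⟩]; rfl
  · rw [coeff_toPoly_nmem n I _ j hj, coeff_zero_of_mem_PIdx n I q hq j hj]

lemma riesz_toPoly (g : ↥I → ℝ) (p : EuclideanSpace ℝ ↥I) :
    riesz n I g (toPoly n I p) = ∑ i : ↥I, g i * p i := by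
  unfold riesz
  exact Finset.sum_congr rfl fun i _ => by rw [coeff_toPoly]

lemma polyV_continuous (p : EuclideanSpace ℝ ↥I) : Continuous (polyV n I p) := by
  unfold polyV
  exact continuous_finset_sum _ fun i _ => continuous_const.mul (monoF_continuous n i.1)

lemma polyV_smul (c : ℝ) (p : EuclideanSpace ℝ ↥I) (t : EuclideanSpace ℝ (Fin n)) :
    polyV n I (c • p) t = c * polyV n I p t := by
  unfold polyV
  rw [Finset.mul_sum]
  exact Finset.sum_congr rfl fun i _ => by
    have : (c • p) i = c * p i := rfl
    rw [this]; ring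

lemma polyV_neg (p : EuclideanSpace ℝ ↥I) (t : EuclideanSpace ℝ (Fin n)) :
    polyV n I (-p) t = -polyV n I p t := by
  have h : (-p) = (-1 : ℝ) • p := by ext i; simp
  rw [h, polyV_smul]; ring

end Aux
section Meas

variable (n : ℕ) (T : Set (EuclideanSpace ℝ (Fin n))) (I : Finset (Fin n →₀ ℕ))

/-- Admissible densities. -/
def Adm (f : EuclideanSpace ℝ (Fin n) → ℝ) : Prop :=
  Integrable f (volume.restrict T) ∧ (0 ≤ᵐ[volume.restrict T] f) ∧
  ∀ i : ↥I, Integrable (fun t => monoF n i.1 t * f t) (volume.restrict T)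

/-- The moment vector of a density. -/
noncomputable def momV (f : EuclideanSpace ℝ (Fin n) → ℝ) : EuclideanSpace ℝ ↥I :=
  WithLp.toLp 2 (fun i => ∫ t in T, monoF n i.1 t * f t)

/-- The moment cone. -/
def Cset : Set (EuclideanSpace ℝ ↥I) := {v | ∃ f, Adm n T I f ∧ momV n T I f = v}

/-- Coefficient vectors of polynomials nonnegative on `T`. -/
def Pset : Set (EuclideanSpace ℝ ↥I) := {p | ∀ t ∈ T, 0 ≤ polyV n I p t}

lemma pairing (f : EuclideanSpace ℝ (Fin n) → ℝ) (hf : Adm n T I f)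
    (p : EuclideanSpace ℝ ↥I) :
    ⟪momV n T I f, p⟫_ℝ = ∫ t in T, polyV n I p t * f t := by
  have h1 : (fun t => polyV n I p t * f t)
      = fun t => ∑ i : ↥I, p i * (monoF n i.1 t * f t) := by
    funext t
    unfold polyV
    rw [Finset.sum_mul]
    exact Finset.sum_congr rfl fun i _ => by ring
  rw [h1, integral_finset_sum _ fun i _ => ((hf.2.2 i).const_mul (p i))]
  simp only [integral_const_mul]
  simp only [PiLp.inner_apply, RCLike.inner_apply, conj_trivial]
  unfold momV
  exact Finset.sum_congr rfl fun i _ => by ring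

lemma adm_zero : Adm n T I (fun _ => 0) := by
  refine ⟨by simpa using integrable_zero _ _ _, ?_, fun i => by simpa using integrable_zero _ _ _⟩
  · filter_upwards with t using le_refl 0

lemma momV_zero : momV n T I (fun _ => 0) = 0 := by
  ext i
  unfold momV
  simp

lemma adm_add (f g : EuclideanSpace ℝ (Fin n) → ℝ) (hf : Adm n T I f) (hg : Adm n T I g) :
    Adm n T I (fun t => f t + g t) := by
  refine ⟨hf.1.add hg.1, ?_, fun i => ?_⟩
  · filter_upwards [hf.2.1, hg.2.1] with t h1 h2 using add_nonneg h1 h2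
  · have : (fun t => monoF n i.1 t * (f t + g t))
        = fun t => monoF n i.1 t * f t + monoF n i.1 t * g t := by funext t; ring
    rw [this]
    exact (hf.2.2 i).add (hg.2.2 i)

lemma momV_add (f g : EuclideanSpace ℝ (Fin n) → ℝ) (hf : Adm n T I f) (hg : Adm n T I g) :
    momV n T I (fun t => f t + g t) = momV n T I f + momV n T I g := by
  ext i
  show ∫ t in T, monoF n i.1 t * (f t + g t) = (∫ t in T, monoF n i.1 t * f t)
    + ∫ t in T, monoF n i.1 t * g t
  have : (fun t => monoF n i.1 t * (f t + g t))
      = fun t => monoF n i.1 t * f t + monoF n i.1 t * g t := by funext t; ring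
  rw [this, integral_add (hf.2.2 i) (hg.2.2 i)]

lemma adm_smul (c : ℝ) (hc : 0 ≤ c) (f : EuclideanSpace ℝ (Fin n) → ℝ) (hf : Adm n T I f) :
    Adm n T I (fun t => c * f t) := by
  refine ⟨hf.1.const_mul c, ?_, fun i => ?_⟩
  · filter_upwards [hf.2.1] with t h1 using mul_nonneg hc h1
  · have : (fun t => monoF n i.1 t * (c * f t))
        = fun t => c * (monoF n i.1 t * f t) := by funext t; ring
    rw [this]
    exact (hf.2.2 i).const_mul c

lemma momV_smul (c : ℝ) (f : EuclideanSpace ℝ (Fin n) → ℝ) (hf : Adm n T I f) :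
    momV n T I (fun t => c * f t) = c • momV n T I f := by
  ext i
  show ∫ t in T, monoF n i.1 t * (c * f t) = c * ∫ t in T, monoF n i.1 t * f t
  have : (fun t => monoF n i.1 t * (c * f t))
      = fun t => c * (monoF n i.1 t * f t) := by funext t; ring
  rw [this, integral_const_mul]

/-- The moment cone as a convex cone. -/
noncomputable def Ccone : ConvexCone ℝ (EuclideanSpace ℝ ↥I) where
  carrier := Cset n T I
  smul_mem' := by
    rintro c hc v ⟨f, hf, rfl⟩
    exact ⟨fun t => c * f t, adm_smul n T I c hc.le f hf, momV_smul n T I c f hf⟩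
  add_mem' := by
    rintro v ⟨f, hf, rfl⟩ w ⟨g, hg, rfl⟩
    exact ⟨fun t => f t + g t, adm_add n T I f g hf hg, momV_add n T I f g hf hg⟩

lemma zero_mem_Cset : (0 : EuclideanSpace ℝ ↥I) ∈ Cset n T I :=
  ⟨fun _ => 0, adm_zero n T I, momV_zero n T I⟩

end Meas
section Indic

variable (n : ℕ) (T : Set (EuclideanSpace ℝ (Fin n))) (I : Finset (Fin n →₀ ℕ))

/-- Indicator density of `T ∩ ball t₀ ε`. -/
noncomputable def indF (t₀ : EuclideanSpace ℝ (Fin n)) (ε : ℝ) :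
    EuclideanSpace ℝ (Fin n) → ℝ :=
  (T ∩ Metric.ball t₀ ε).indicator fun _ => (1 : ℝ)

lemma indF_S_measurable (hT : IsClosed T) (t₀ : EuclideanSpace ℝ (Fin n)) (ε : ℝ) :
    MeasurableSet (T ∩ Metric.ball t₀ ε) :=
  hT.measurableSet.inter measurableSet_ball

lemma indF_adm (hT : IsClosed T) (t₀ : EuclideanSpace ℝ (Fin n)) (ε : ℝ) :
    Adm n T I (indF n T t₀ ε) := by
  set S := T ∩ Metric.ball t₀ ε with hS
  have hSm : MeasurableSet S := indF_S_measurable n T hT t₀ ε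
  have hSfin : volume S < ⊤ :=
    lt_of_le_of_lt (measure_mono (Set.inter_subset_right)) measure_ball_lt_top
  have hint : ∀ h : EuclideanSpace ℝ (Fin n) → ℝ, Continuous h →
      Integrable (S.indicator h) (volume.restrict T) := by
    intro h hh
    have h1 : IntegrableOn h (Metric.closedBall t₀ ε) volume :=
      hh.continuousOn.integrableOn_compact (isCompact_closedBall t₀ ε)
    have h2 : IntegrableOn h S volume :=
      h1.mono_set ((Set.inter_subset_right).trans Metric.ball_subset_closedBall)
    have h3 : Integrable (S.indicator h) volume := (integrable_indicator_iff hSm).mpr h2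
    exact h3.restrict
  constructor
  · exact hint _ continuous_const
  constructor
  · filter_upwards with t
    exact Set.indicator_nonneg (fun _ _ => zero_le_one) t
  · intro i
    have : (fun t => monoF n i.1 t * indF n T t₀ ε t) = S.indicator (monoF n i.1) := by
      funext t
      unfold indF
      rw [← hS]
      by_cases ht : t ∈ S <;> simp [Set.indicator_of_mem, Set.indicator_of_notMem, ht]
    rw [this]
    exact hint _ (monoF_continuous n i.1)

lemma pairing_indF (hT : IsClosed T) (t₀ : EuclideanSpace ℝ (Fin n)) (ε : ℝ)
    (p : EuclideanSpace ℝ ↥I) :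
    ⟪momV n T I (indF n T t₀ ε), p⟫_ℝ = ∫ t in T ∩ Metric.ball t₀ ε, polyV n I p t := by
  rw [pairing n T I _ (indF_adm n T I hT t₀ ε) p]
  set S := T ∩ Metric.ball t₀ ε with hS
  have h1 : (fun t => polyV n I p t * indF n T t₀ ε t) = S.indicator (polyV n I p) := by
    funext t
    unfold indF
    rw [← hS]
    by_cases ht : t ∈ S <;> simp [Set.indicator_of_mem, Set.indicator_of_notMem, ht]
  rw [h1, setIntegral_indicator (indF_S_measurable n T hT t₀ ε),
    Set.inter_eq_self_of_subset_right Set.inter_subset_left]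

lemma vol_S_pos (hTreg : RegularSet n T) (t₀ : EuclideanSpace ℝ (Fin n)) (ht₀ : t₀ ∈ T)
    (ε : ℝ) (hε : 0 < ε) : 0 < volume (T ∩ Metric.ball t₀ ε) := by
  have := hTreg.2 t₀ ht₀ ε hε
  have h2 : {x ∈ T | ‖x - t₀‖ < ε} = T ∩ Metric.ball t₀ ε := by
    ext x
    simp [Metric.mem_ball, dist_eq_norm]
  rwa [h2] at this

/-- If `polyV p` is negative somewhere on `T`, some indicator density has negative pairing. -/
lemma neg_pairing (hT : IsClosed T) (hTreg : RegularSet n T)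
    (p : EuclideanSpace ℝ ↥I) (t₀ : EuclideanSpace ℝ (Fin n)) (ht₀ : t₀ ∈ T)
    (hneg : polyV n I p t₀ < 0) :
    ∃ ε : ℝ, 0 < ε ∧ ⟪momV n T I (indF n T t₀ ε), p⟫_ℝ < 0 := by
  set c := polyV n I p t₀ with hc
  have hc2 : c / 2 < 0 := by linarith
  obtain ⟨ε, hε, hball⟩ : ∃ ε > 0, ∀ t ∈ Metric.ball t₀ ε, polyV n I p t < c / 2 := by
    have hcont := (polyV_continuous n I p).continuousAt (x := t₀)
    have := hcont.preimage_mem_nhds (Iio_mem_nhds (show c < c / 2 by linarith))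
    rcases Metric.mem_nhds_iff.mp this with ⟨ε, hε, hsub⟩
    exact ⟨ε, hε, fun t ht => hsub ht⟩
  refine ⟨ε, hε, ?_⟩
  rw [pairing_indF n T I hT t₀ ε p]
  set S := T ∩ Metric.ball t₀ ε with hS
  have hSm : MeasurableSet S := indF_S_measurable n T hT t₀ ε
  have hSfin : volume S < ⊤ :=
    lt_of_le_of_lt (measure_mono (Set.inter_subset_right)) measure_ball_lt_top
  have hSpos : 0 < volume S := vol_S_pos n T hTreg t₀ ht₀ ε hε
  have hint : IntegrableOn (polyV n I p) S volume :=
    ((polyV_continuous n I p).continuousOn.integrableOn_compact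
      (isCompact_closedBall t₀ ε)).mono_set
      ((Set.inter_subset_right).trans Metric.ball_subset_closedBall)
  have hle : ∫ t in S, polyV n I p t ≤ ∫ _ in S, c / 2 := by
    apply setIntegral_mono_on hint (integrableOn_const hSfin.ne) hSm
    intro t ht
    exact (hball t ht.2).le
  have hconst : ∫ _ in S, c / 2 = (volume S).toReal * (c / 2) := by
    rw [setIntegral_const, smul_eq_mul, Measure.real]
  have htoReal : 0 < (volume S).toReal := ENNReal.toReal_pos hSpos.ne' hSfin.ne
  calc ∫ t in S, polyV n I p t ≤ (volume S).toReal * (c / 2) := by rw [← hconst]; exact hle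
    _ < 0 := mul_neg_of_pos_of_neg htoReal hc2

end Indic
section DualC

variable (n : ℕ) (T : Set (EuclideanSpace ℝ (Fin n))) (I : Finset (Fin n →₀ ℕ))

lemma Pset_closed : IsClosed (Pset n T I) := by
  have : Pset n T I = ⋂ t ∈ T, {p : EuclideanSpace ℝ ↥I | 0 ≤ polyV n I p t} := by
    ext p; simp [Pset, Set.mem_iInter]
  rw [this]
  refine isClosed_biInter fun t _ => isClosed_le continuous_const ?_
  unfold polyV
  exact continuous_finset_sum _ fun i _ =>
    ((EuclideanSpace.proj (i : ↥I)).continuous).mul continuous_const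

lemma dual_C_eq_P (hT : IsClosed T) (hTreg : RegularSet n T) :
    (ProperCone.innerDual (Cset n T I) : Set (EuclideanSpace ℝ ↥I)) = Pset n T I := by
  ext p
  rw [SetLike.mem_coe, ProperCone.mem_innerDual]
  constructor
  · intro h
    by_contra hp
    obtain ⟨t₀, ht₀, hneg⟩ : ∃ t₀ ∈ T, polyV n I p t₀ < 0 := by
      unfold Pset at hp
      rw [Set.mem_setOf_eq] at hp
      push_neg at hp
      obtain ⟨t₀, ht₀, h'⟩ := hp
      exact ⟨t₀, ht₀, h'⟩
    obtain ⟨ε, hε, hlt⟩ := neg_pairing n T I hT hTreg p t₀ ht₀ hneg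
    exact absurd (h ⟨indF n T t₀ ε, indF_adm n T I hT t₀ ε, rfl⟩) (not_le.mpr hlt)
  · rintro hp x ⟨f, hf, rfl⟩
    rw [pairing n T I f hf p]
    apply integral_nonneg_of_ae
    filter_upwards [hf.2.1, ae_restrict_mem hT.measurableSet] with t hft htT
    exact mul_nonneg (hp t htT) hft

lemma dual_closure_C (hT : IsClosed T) (hTreg : RegularSet n T) :
    (ProperCone.innerDual (closure (Cset n T I)) : Set (EuclideanSpace ℝ ↥I)) = Pset n T I := by
  rw [← dual_C_eq_P n T I hT hTreg]
  apply le_antisymm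
  · exact ProperCone.innerDual_le_innerDual subset_closure
  · intro p hp
    rw [SetLike.mem_coe, ProperCone.mem_innerDual] at hp ⊢
    intro x hx
    have hcl : x ∈ closure {y : EuclideanSpace ℝ ↥I | 0 ≤ ⟪y, p⟫_ℝ} :=
      closure_mono (fun y hy => hp hy) hx
    have : IsClosed {y : EuclideanSpace ℝ ↥I | 0 ≤ ⟪y, p⟫_ℝ} :=
      isClosed_le continuous_const (continuous_id.inner continuous_const)
    rw [this.closure_eq] at hcl
    exact hcl

lemma P_dual_eq_closure_C (hT : IsClosed T) (hTreg : RegularSet n T) :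
    (ProperCone.innerDual (Pset n T I) : Set (EuclideanSpace ℝ ↥I)) = closure (Cset n T I) := by
  have hpt : (Ccone n T I).Pointed := zero_mem_Cset n T I
  set K : ProperCone ℝ (EuclideanSpace ℝ ↥I) := Submodule.closure ((Ccone n T I).toPointedCone hpt)
  have hcar : (K : Set (EuclideanSpace ℝ ↥I)) = closure (Cset n T I) := rfl
  rw [← dual_closure_C n T I hT hTreg, ← hcar, ProperCone.innerDual_innerDual]

end DualC
section Interior

variable (n : ℕ) (T : Set (EuclideanSpace ℝ (Fin n))) (I : Finset (Fin n →₀ ℕ))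

lemma Pset_smul (c : ℝ) (hc : 0 ≤ c) (p : EuclideanSpace ℝ ↥I) (hp : p ∈ Pset n T I) :
    c • p ∈ Pset n T I := by
  intro t ht
  rw [polyV_smul]
  exact mul_nonneg hc (hp t ht)

lemma gv_mem_interior (gv : EuclideanSpace ℝ ↥I)
    (hb : ∀ p ∈ Pset n T I, p ≠ 0 → 0 < ⟪gv, p⟫_ℝ) :
    gv ∈ interior (ProperCone.innerDual (Pset n T I) : Set (EuclideanSpace ℝ ↥I)) := by
  by_cases hP : ∀ p ∈ Pset n T I, p = 0
  · have : (ProperCone.innerDual (Pset n T I) : Set (EuclideanSpace ℝ ↥I)) = Set.univ := by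
      ext y
      simp only [Set.mem_univ, iff_true, SetLike.mem_coe, ProperCone.mem_innerDual]
      intro x hx
      rw [hP x hx, inner_zero_left]
    rw [this, interior_univ]
    trivial
  · push_neg at hP
    obtain ⟨p₀, hp₀P, hp₀⟩ := hP
    set K := Pset n T I ∩ Metric.sphere (0 : EuclideanSpace ℝ ↥I) 1 with hK
    have hKc : IsCompact K :=
      (isCompact_sphere (0 : EuclideanSpace ℝ ↥I) 1).inter_left (Pset_closed n T I)
    have hKne : K.Nonempty := by
      refine ⟨‖p₀‖⁻¹ • p₀, Pset_smul n T I _ (by positivity) p₀ hp₀P, ?_⟩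
      rw [mem_sphere_zero_iff_norm, norm_smul, norm_inv, norm_norm,
        inv_mul_cancel₀ (norm_ne_zero_iff.mpr hp₀)]
    obtain ⟨q, hqK, hmin'⟩ := hKc.exists_isMinOn hKne
      ((continuous_const.inner continuous_id).continuousOn
        (f := fun p : EuclideanSpace ℝ ↥I => ⟪gv, p⟫_ℝ))
    have hmin : ∀ x ∈ K, ⟪gv, q⟫_ℝ ≤ ⟪gv, x⟫_ℝ := fun x hx => hmin' hx
    set δ := ⟪gv, q⟫_ℝ with hδdef
    have hq1 : ‖q‖ = 1 := mem_sphere_zero_iff_norm.mp hqK.2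
    have hδ : 0 < δ := hb q hqK.1 (by intro h; rw [h, norm_zero] at hq1; norm_num at hq1)
    rw [mem_interior]
    refine ⟨Metric.ball gv δ, ?_, Metric.isOpen_ball, Metric.mem_ball_self hδ⟩
    intro y hy
    rw [SetLike.mem_coe, ProperCone.mem_innerDual]
    intro x hx
    rcases eq_or_ne x 0 with rfl | hx0
    · rw [inner_zero_left]
    · have hxn : (0:ℝ) < ‖x‖ := norm_pos_iff.mpr hx0
      have hu : ‖x‖⁻¹ • x ∈ K := by
        refine ⟨Pset_smul n T I _ (by positivity) x hx, ?_⟩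
        rw [mem_sphere_zero_iff_norm, norm_smul, norm_inv, norm_norm,
          inv_mul_cancel₀ hxn.ne']
      have h1 : δ ≤ ⟪gv, ‖x‖⁻¹ • x⟫_ℝ := hmin _ hu
      rw [real_inner_smul_right] at h1
      have h2 : δ * ‖x‖ ≤ ⟪gv, x⟫_ℝ := by
        have := mul_le_mul_of_nonneg_left h1 hxn.le
        rw [← mul_assoc, mul_inv_cancel₀ hxn.ne', one_mul] at this
        linarith [this]
      have h3 : ⟪x, y⟫_ℝ = ⟪x, gv⟫_ℝ + ⟪x, y - gv⟫_ℝ := by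
        rw [← inner_add_right]
        norm_num
      have h4 : |⟪x, y - gv⟫_ℝ| ≤ ‖x‖ * ‖y - gv‖ := abs_real_inner_le_norm x (y - gv)
      have h5 : ‖y - gv‖ < δ := by
        rw [Metric.mem_ball, dist_eq_norm] at hy
        exact hy
      have h6 : ⟪x, gv⟫_ℝ = ⟪gv, x⟫_ℝ := real_inner_comm gv x
      have h7 : ‖x‖ * ‖y - gv‖ ≤ ‖x‖ * δ := mul_le_mul_of_nonneg_left h5.le hxn.le
      have h8 : -(‖x‖ * δ) ≤ ⟪x, y - gv⟫_ℝ := by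
        have := neg_abs_le ⟪x, y - gv⟫_ℝ
        linarith
      rw [h3, h6]
      nlinarith
end Interior
section IntC

variable (n : ℕ) (T : Set (EuclideanSpace ℝ (Fin n))) (I : Finset (Fin n →₀ ℕ))

/-- Moment vectors of indicator densities. -/
def Vset : Set (EuclideanSpace ℝ ↥I) :=
  {v | ∃ t₀ ∈ T, ∃ ε > (0:ℝ), momV n T I (indF n T t₀ ε) = v}

lemma Vset_subset_Cset (hT : IsClosed T) : Vset n T I ⊆ Cset n T I := by
  rintro v ⟨t₀, _, ε, _, rfl⟩
  exact ⟨indF n T t₀ ε, indF_adm n T I hT t₀ ε, rfl⟩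

lemma span_Vset (hT : IsClosed T) (hTreg : RegularSet n T) (gv : EuclideanSpace ℝ ↥I)
    (hb : ∀ p ∈ Pset n T I, p ≠ 0 → 0 < ⟪gv, p⟫_ℝ) :
    Submodule.span ℝ (Vset n T I) = ⊤ := by
  by_contra hne
  have hbot : (Submodule.span ℝ (Vset n T I))ᗮ ≠ ⊥ := by
    intro h
    exact hne (Submodule.orthogonal_eq_bot_iff.mp h)
  obtain ⟨p, hpmem, hp0⟩ := Submodule.exists_mem_ne_zero_of_ne_bot hbot
  have hperp : ∀ v ∈ Vset n T I, ⟪v, p⟫_ℝ = 0 := fun v hv =>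
    (Submodule.mem_orthogonal _ p).mp hpmem v (Submodule.subset_span hv)
  have hzero : ∀ t₀ ∈ T, polyV n I p t₀ = 0 := by
    intro t₀ ht₀
    by_contra hne0
    rcases lt_or_gt_of_ne hne0 with hlt | hgt
    · obtain ⟨ε, hε, h⟩ := neg_pairing n T I hT hTreg p t₀ ht₀ hlt
      rw [hperp _ ⟨t₀, ht₀, ε, hε, rfl⟩] at h
      exact lt_irrefl 0 h
    · have hlt' : polyV n I (-p) t₀ < 0 := by rw [polyV_neg]; linarith
      obtain ⟨ε, hε, h⟩ := neg_pairing n T I hT hTreg (-p) t₀ ht₀ hlt'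
      rw [inner_neg_right, hperp _ ⟨t₀, ht₀, ε, hε, rfl⟩, neg_zero] at h
      exact lt_irrefl 0 h
  have hpP : p ∈ Pset n T I := fun t ht => (hzero t ht).ge
  have hnpP : -p ∈ Pset n T I := fun t ht => by rw [polyV_neg, hzero t ht, neg_zero]
  have h1 := hb p hpP hp0
  have h2 := hb (-p) hnpP (neg_ne_zero.mpr hp0)
  rw [inner_neg_right] at h2
  linarith

lemma smul_mem_Cset (c : ℝ) (hc : 0 ≤ c) (v : EuclideanSpace ℝ ↥I) (hv : v ∈ Cset n T I) :
    c • v ∈ Cset n T I := by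
  rcases eq_or_lt_of_le hc with rfl | hc'
  · rw [zero_smul]
    exact zero_mem_Cset n T I
  · exact (Ccone n T I).smul_mem hc' hv

lemma interior_Cset_nonempty (hT : IsClosed T) (hTreg : RegularSet n T)
    (gv : EuclideanSpace ℝ ↥I)
    (hb : ∀ p ∈ Pset n T I, p ≠ 0 → 0 < ⟪gv, p⟫_ℝ) :
    (interior (Cset n T I)).Nonempty := by
  classical
  have hspan := span_Vset n T I hT hTreg gv hb
  -- pick a finite subset of Vset spanning everything
  set b := Module.finBasis ℝ (EuclideanSpace ℝ ↥I) with hb'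
  have hmem : ∀ k, b k ∈ Submodule.span ℝ (Vset n T I) := fun k => hspan ▸ Submodule.mem_top
  have hfin : ∀ k, ∃ F : Finset (EuclideanSpace ℝ ↥I),
      ↑F ⊆ Vset n T I ∧ b k ∈ Submodule.span ℝ (F : Set (EuclideanSpace ℝ ↥I)) := fun k =>
    Submodule.mem_span_finite_of_mem_span (hmem k)
  choose Fk hFk1 hFk2 using hfin
  set F : Finset (EuclideanSpace ℝ ↥I) := Finset.univ.biUnion Fk with hF
  have hFV : (F : Set (EuclideanSpace ℝ ↥I)) ⊆ Vset n T I := by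
    intro v hv
    rw [hF] at hv
    simp only [Finset.coe_biUnion, Set.mem_iUnion] at hv
    obtain ⟨k, _, hk⟩ := hv
    exact hFk1 k hk
  have hFspan : Submodule.span ℝ (F : Set (EuclideanSpace ℝ ↥I)) = ⊤ := by
    rw [eq_top_iff]
    rw [← b.span_eq]
    rw [Submodule.span_le]
    rintro x ⟨k, rfl⟩
    exact Submodule.span_mono (by
      intro y hy
      exact Finset.mem_coe.mpr (Finset.mem_biUnion.mpr ⟨k, Finset.mem_univ k, hy⟩)) (hFk2 k)
  -- the linear combination map
  set L : (↥F → ℝ) →ₗ[ℝ] EuclideanSpace ℝ ↥I :=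
    Fintype.linearCombination ℝ (fun v : ↥F => (v : EuclideanSpace ℝ ↥I)) with hL
  have hLsurj : Function.Surjective L := by
    rw [← LinearMap.range_eq_top, hL, Fintype.range_linearCombination]
    have : (Set.range fun v : ↥F => (v : EuclideanSpace ℝ ↥I)) = (F : Set (EuclideanSpace ℝ ↥I)) :=
      Subtype.range_coe
    rw [this]
    exact hFspan
  have hLcont : Continuous L := L.continuous_of_finiteDimensional
  set Lc : (↥F → ℝ) →L[ℝ] EuclideanSpace ℝ ↥I := ⟨L, hLcont⟩ with hLc
  have hopen : IsOpenMap Lc := Lc.isOpenMap hLsurj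
  set U : Set (↥F → ℝ) := ⋂ v : ↥F, {a | 0 < a v} with hU
  have hUopen : IsOpen U :=
    isOpen_iInter_of_finite fun v => isOpen_lt continuous_const (continuous_apply v)
  have hUne : (Lc '' U).Nonempty := ⟨Lc (fun _ => 1), ⟨fun _ => 1, by
    simp only [hU, Set.mem_iInter]; intro v; norm_num, rfl⟩⟩
  have hsub : Lc '' U ⊆ Cset n T I := by
    rintro _ ⟨a, ha, rfl⟩
    have : Lc a = ∑ v : ↥F, a v • (v : EuclideanSpace ℝ ↥I) := rfl
    rw [this]
    apply Finset.sum_induction _ (· ∈ Cset n T I)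
    · exact fun x y hx hy => (Ccone n T I).add_mem hx hy
    · exact zero_mem_Cset n T I
    · intro v _
      have hav : 0 < a v := by
        rw [hU, Set.mem_iInter] at ha
        exact ha v
      exact smul_mem_Cset n T I _ hav.le _ (Vset_subset_Cset n T I hT (hFV v.2))
  obtain ⟨y, hy⟩ := hUne
  exact ⟨y, interior_maximal hsub (hopen U hUopen) hy⟩

end IntC
section Finish

lemma mem_of_interior_closure {E : Type*} [NormedAddCommGroup E] [NormedSpace ℝ E]
    {s : Set E} (hs : Convex ℝ s) {y : E} (hy : y ∈ interior s) {x : E}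
    (hx : x ∈ interior (closure s)) : x ∈ s := by
  rcases eq_or_ne x y with rfl | hxy
  · exact interior_subset hy
  · obtain ⟨r, hr, hball⟩ : ∃ r > 0, Metric.ball x r ⊆ closure s := by
      rw [mem_interior_iff_mem_nhds, Metric.mem_nhds_iff] at hx
      obtain ⟨r, hr, h⟩ := hx
      exact ⟨r, hr, h⟩
    set u := x - y with hu
    have hu0 : u ≠ 0 := sub_ne_zero.mpr hxy
    have hun : (0:ℝ) < ‖u‖ := norm_pos_iff.mpr hu0
    set c : ℝ := r / (2 * ‖u‖) with hc
    have hc0 : 0 < c := by positivity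
    set z := x + c • u with hz
    have hzball : z ∈ Metric.ball x r := by
      rw [Metric.mem_ball, dist_eq_norm]
      have : z - x = c • u := by rw [hz]; abel
      rw [this, norm_smul, Real.norm_eq_abs, abs_of_pos hc0, hc]
      rw [div_mul_eq_mul_div, mul_comm]
      rw [mul_comm (2:ℝ) ‖u‖, ← div_div]
      have : ‖u‖ * r / ‖u‖ = r := by field_simp
      rw [this]
      linarith
    have hzcl : z ∈ closure s := hball hzball
    set a : ℝ := c / (1 + c) with ha
    set b : ℝ := 1 / (1 + c) with hbdef
    have h1c : (0:ℝ) < 1 + c := by linarith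
    have ha0 : 0 < a := by positivity
    have hb0 : (0:ℝ) ≤ b := by positivity
    have hab : a + b = 1 := by rw [ha, hbdef]; field_simp; ring
    have hcombo : a • y + b • z = x := by
      rw [hz, hu]
      have h1 : a • y + b • (x + c • (x - y)) = (a - b * c) • y + (b + b * c) • x := by
        rw [smul_add, smul_smul, smul_sub, sub_smul, add_smul]
        abel
      rw [h1]
      have h2 : a - b * c = 0 := by rw [ha, hbdef]; field_simp; ring
      have h3 : b + b * c = 1 := by rw [hbdef]; field_simp
      rw [h2, h3, zero_smul, one_smul, zero_add]
    have := hs.combo_interior_closure_mem_interior hy hzcl ha0 hb0 hab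
    rw [hcombo] at this
    exact interior_subset this

variable (n : ℕ) (T : Set (EuclideanSpace ℝ (Fin n))) (I : Finset (Fin n →₀ ℕ))

lemma gv_mem_Cset (hT : IsClosed T) (hTreg : RegularSet n T) (gv : EuclideanSpace ℝ ↥I)
    (hb : ∀ p ∈ Pset n T I, p ≠ 0 → 0 < ⟪gv, p⟫_ℝ) : gv ∈ Cset n T I := by
  have hint := gv_mem_interior n T I gv hb
  rw [P_dual_eq_closure_C n T I hT hTreg] at hint
  obtain ⟨y, hy⟩ := interior_Cset_nonempty n T I hT hTreg gv hb
  exact mem_of_interior_closure (Ccone n T I).convex hy hint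

end Finish
section Main

variable (n : ℕ) (T : Set (EuclideanSpace ℝ (Fin n))) (I : Finset (Fin n →₀ ℕ))

lemma pairing_integrable (f : EuclideanSpace ℝ (Fin n) → ℝ) (hf : Adm n T I f)
    (p : EuclideanSpace ℝ ↥I) :
    Integrable (fun t => polyV n I p t * f t) (volume.restrict T) := by
  have h1 : (fun t => polyV n I p t * f t)
      = fun t => ∑ i : ↥I, p i * (monoF n i.1 t * f t) := by
    funext t
    unfold polyV
    rw [Finset.sum_mul]
    exact Finset.sum_congr rfl fun i _ => by ring
  rw [h1]
  exact integrable_finset_sum _ fun i _ => (hf.2.2 i).const_mul (p i)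

lemma monoF_zero_idx (t : EuclideanSpace ℝ (Fin n)) : monoF n 0 t = 1 := by
  unfold monoF
  simp

lemma inner_gv (g : ↥I → ℝ) (p : EuclideanSpace ℝ ↥I) :
    ⟪(show EuclideanSpace ℝ ↥I from WithLp.toLp 2 (fun i => g i)), p⟫_ℝ = ∑ i : ↥I, g i * p i := by
  simp only [PiLp.inner_apply, RCLike.inner_apply, conj_trivial]
  exact Finset.sum_congr rfl fun i _ => mul_comm _ _

end Main

theorem stmt_13 (n : ℕ) (T : Set (EuclideanSpace ℝ (Fin n))) (hT : IsClosed T)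
    (hTreg : RegularSet n T)
    (I : Finset (Fin n →₀ ℕ)) (hIreg : RegularIdx n I)
    (h0I : (0 : Fin n →₀ ℕ) ∈ I) (g : I → ℝ) (hg0 : g ⟨0, h0I⟩ = 1) :
    (∃ f : EuclideanSpace ℝ (Fin n) → ℝ,
      Integrable f (volume.restrict T) ∧
      (0 ≤ᵐ[volume.restrict T] f) ∧
      (∀ i : I, Integrable (fun t => monoF n i t * f t) (volume.restrict T)) ∧
      (∀ i : I, ∫ t in T, monoF n i t * f t = g i)) ↔
    (∀ p ∈ PIdx n I, p ≠ 0 →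
      (∀ t ∈ T, 0 ≤ MvPolynomial.eval (fun k => t k) p) → 0 < riesz n I g p) := by
  classical
  set gv : EuclideanSpace ℝ ↥I := WithLp.toLp 2 (fun i => g i) with hgv
  constructor
  · rintro ⟨f, hf1, hf2, hf3, hf4⟩ q hqP hq0 hqnn
    have hAdm : Adm n T I f := ⟨hf1, hf2, hf3⟩
    set p := pvec n I q with hpdef
    have htp : toPoly n I p = q := toPoly_pvec n I q hqP
    have hmom : momV n T I f = gv := congrArg (WithLp.toLp 2) (funext fun i => hf4 i)
    have hq_eval : ∀ t : EuclideanSpace ℝ (Fin n),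
        polyV n I p t = MvPolynomial.eval (fun k => t k) q := by
      intro t
      rw [← htp, eval_toPoly]
    have hr : riesz n I g q = ∫ t in T, polyV n I p t * f t := by
      rw [← htp, riesz_toPoly, ← inner_gv n I g p]
      rw [show (show EuclideanSpace ℝ ↥I from WithLp.toLp 2 (fun i => g i)) = gv from rfl]
      rw [← hmom, pairing n T I f hAdm p]
    rw [hr]
    have hnnae : 0 ≤ᵐ[volume.restrict T] fun t => polyV n I p t * f t := by
      filter_upwards [hf2, ae_restrict_mem hT.measurableSet] with t h1 h2
      exact mul_nonneg (by rw [hq_eval t]; exact hqnn t h2) h1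
    have hInt := pairing_integrable n T I f hAdm p
    rcases eq_or_lt_of_le (integral_nonneg_of_ae hnnae) with heq | hlt
    · exfalso
      have hae0 : (fun t => polyV n I p t * f t) =ᵐ[volume.restrict T] 0 :=
        (integral_eq_zero_iff_of_nonneg_ae hnnae hInt).mp heq.symm
      have hZ : ∀ᵐ t ∂(volume.restrict T),
          MvPolynomial.eval (fun k => t k) q ≠ 0 := by
        apply ae_restrict_of_ae
        rw [ae_iff]
        simpa using mv_null_euc n q hq0
      have hf0 : f =ᵐ[volume.restrict T] 0 := by
        filter_upwards [hae0, hZ] with t h1 h2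
        have h3 : polyV n I p t ≠ 0 := by rw [hq_eval t]; exact h2
        have h4 : polyV n I p t * f t = 0 := h1
        have := mul_eq_zero.mp h4
        tauto
      have hone : (1:ℝ) = ∫ t in T, f t := by
        have h := hf4 ⟨0, h0I⟩
        rw [hg0] at h
        rw [← h]
        apply integral_congr_ae
        filter_upwards with t
        show monoF n 0 t * f t = f t
        rw [monoF_zero_idx, one_mul]
      rw [integral_congr_ae hf0] at hone
      simp at hone
    · exact hlt
  · intro hb
    have hbv : ∀ p ∈ Pset n T I, p ≠ 0 → 0 < ⟪gv, p⟫_ℝ := by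
      intro p hpP hp0
      have h1 := hb (toPoly n I p) (toPoly_mem n I p)
        (fun h => hp0 (toPoly_eq_zero n I p h))
        (fun t ht => by rw [eval_toPoly]; exact hpP t ht)
      rw [riesz_toPoly] at h1
      rw [show gv = (show EuclideanSpace ℝ ↥I from WithLp.toLp 2 (fun i => g i)) from rfl, inner_gv]
      exact h1
    obtain ⟨f, hAdm, hmom⟩ := gv_mem_Cset n T I hT hTreg gv hbv
    exact ⟨f, hAdm.1, hAdm.2.1, hAdm.2.2,
      fun i => congrArg (fun v => v i) hmom⟩
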